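/- For every composition μ, the signed sum ∑_{I ∈ HI(μ)} ε(I) equals the (ordinary) cardinality of HI_spec(μ). -/
import Mathlib


/-- A hook, encoded by its size `s ≥ 1` and its height `h ∈ {0, …, s-1}`. -/
structure Hook where
  size : ℕ
  height : ℕ
  size_pos : 0 < size
  height_lt : height < size

/-- The sign of a hook, `(-1) ^ height`. -/
def Hook.sign (h : Hook) : ℤ := (-1) ^ h.height

/-- A hook permutation of length `l`: a sequence of `l` hooks together with a
permutation of `{1, …, l}`. -/
structure HookPerm (l : ℕ) where
  hooks : Fin l → Hook
  perm : Equiv.Perm (Fin l)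

/-- The size of a hook permutation: the sum of the sizes of its hooks. -/
def HookPerm.size {l : ℕ} (H : HookPerm l) : ℕ := ∑ i, (H.hooks i).size

/-- A hook involution: the permutation is an involution and paired indices carry
equal hooks. -/
def HookPerm.IsInvolution {l : ℕ} (H : HookPerm l) : Prop :=
  H.perm * H.perm = 1 ∧ ∀ i, H.hooks (H.perm i) = H.hooks i

/-- The sign of a hook involution: the product of the signs of the hooks at the
fixed points of the permutation. -/
def HookPerm.invSign {l : ℕ} (H : HookPerm l) : ℤ :=
  ∏ i ∈ Finset.univ.filter (fun i => H.perm i = i), (H.hooks i).sign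

/-- A hook involution is special when every fixed point carries a hook of odd
size and height `0`. -/
def HookPerm.IsSpecial {l : ℕ} (H : HookPerm l) : Prop :=
  ∀ i, H.perm i = i → Odd (H.hooks i).size ∧ (H.hooks i).height = 0

/-! ### Auxiliary material -/

theorem Hook.ext' {a b : Hook} (hs : a.size = b.size) (hh : a.height = b.height) : a = b := by
  cases a; cases b; simp_all

theorem HookPerm.ext' {l : ℕ} {a b : HookPerm l} (h1 : a.hooks = b.hooks)
    (h2 : a.perm = b.perm) : a = b := by
  cases a; cases b; simp_all

/-- The sign-reversing involution on hooks: fixes "good" hooks (odd size,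
height 0); otherwise bumps the height up or down by one depending on parity. -/
def Hook.tau (H : Hook) : Hook :=
  if Odd H.size ∧ H.height = 0 then H
  else
    { size := H.size
      height := if H.height % 2 = H.size % 2 then H.height + 1 else H.height - 1
      size_pos := H.size_pos
      height_lt := by
        have h1 := H.height_lt
        have h2 := H.size_pos
        split <;> omega }

theorem Hook.tau_size (H : Hook) : H.tau.size = H.size := by
  unfold Hook.tau; split <;> rfl

theorem Hook.tau_height (H : Hook) (hb : ¬(Odd H.size ∧ H.height = 0)) :
    H.tau.height = if H.height % 2 = H.size % 2 then H.height + 1 else H.height - 1 := by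
  unfold Hook.tau; rw [if_neg hb]

theorem Hook.tau_bad (H : Hook) (hb : ¬(Odd H.size ∧ H.height = 0)) :
    ¬(Odd H.tau.size ∧ H.tau.height = 0) := by
  rw [Hook.tau_size, Hook.tau_height H hb]
  rw [Nat.odd_iff] at hb ⊢
  have h1 := H.height_lt
  have h2 := H.size_pos
  split <;> omega

theorem Hook.tau_tau (H : Hook) : H.tau.tau = H := by
  by_cases hb : Odd H.size ∧ H.height = 0
  · unfold Hook.tau; rw [if_pos hb, if_pos hb]
  · have hb2 := Hook.tau_bad H hb
    apply Hook.ext'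
    · rw [Hook.tau_size, Hook.tau_size]
    · rw [Hook.tau_height _ hb2, Hook.tau_height _ hb, Hook.tau_size]
      rw [Nat.odd_iff] at hb
      have h1 := H.height_lt
      have h2 := H.size_pos
      by_cases hc : H.height % 2 = H.size % 2
      · rw [if_pos hc, if_neg (by omega)]
        omega
      · rw [if_neg hc, if_pos (by omega)]
        omega

theorem Hook.tau_sign (H : Hook) (hb : ¬(Odd H.size ∧ H.height = 0)) :
    H.tau.sign = - H.sign := by
  unfold Hook.sign
  rw [Hook.tau_height _ hb]
  rw [Nat.odd_iff] at hb
  have h1 := H.height_lt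
  have h2 := H.size_pos
  by_cases hc : H.height % 2 = H.size % 2
  · rw [if_pos hc, pow_succ]; ring
  · rw [if_neg hc]
    nth_rewrite 2 [show H.height = (H.height - 1) + 1 from by omega]
    rw [pow_succ]; ring

theorem Hook.tau_ne (H : Hook) (hb : ¬(Odd H.size ∧ H.height = 0)) : H.tau ≠ H := by
  intro he
  have hh := congrArg Hook.height he
  rw [Hook.tau_height _ hb] at hh
  rw [Nat.odd_iff] at hb
  have h1 := H.height_lt
  have h2 := H.size_pos
  split at hh <;> omega

/-- The set of "bad" fixed points of a hook permutation. -/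
noncomputable def HookPerm.badSet {l : ℕ} (I : HookPerm l) : Finset (Fin l) :=
  @Finset.filter _ (fun i => I.perm i = i ∧ ¬(Odd (I.hooks i).size ∧ (I.hooks i).height = 0))
    (fun _ => Classical.propDecidable _) Finset.univ

theorem HookPerm.mem_badSet {l : ℕ} {I : HookPerm l} {i : Fin l} (h : i ∈ I.badSet) :
    I.perm i = i ∧ ¬(Odd (I.hooks i).size ∧ (I.hooks i).height = 0) := by
  simpa [HookPerm.badSet] using h

theorem HookPerm.mem_badSet_iff {l : ℕ} {I : HookPerm l} {i : Fin l} :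
    i ∈ I.badSet ↔ (I.perm i = i ∧ ¬(Odd (I.hooks i).size ∧ (I.hooks i).height = 0)) := by
  simp [HookPerm.badSet]

theorem HookPerm.badSet_nonempty_of {l : ℕ} {I : HookPerm l} (h : ¬ I.IsSpecial) :
    I.badSet.Nonempty := by
  simp only [HookPerm.IsSpecial, not_forall] at h
  obtain ⟨i, h1, h2⟩ := h
  exact ⟨i, HookPerm.mem_badSet_iff.2 ⟨h1, h2⟩⟩

theorem HookPerm.not_special_of_badSet {l : ℕ} {I : HookPerm l} (h : I.badSet.Nonempty) :
    ¬ I.IsSpecial := by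
  obtain ⟨i, hi⟩ := h
  have hm := HookPerm.mem_badSet hi
  intro hs
  exact hm.2 (hs i hm.1)

/-- The global sign-reversing involution: apply `Hook.tau` at the least bad
fixed point (if any). -/
noncomputable def HookPerm.gT {l : ℕ} (I : HookPerm l) : HookPerm l :=
  if h : I.badSet.Nonempty then
    { hooks := Function.update I.hooks (I.badSet.min' h)
        (Hook.tau (I.hooks (I.badSet.min' h)))
      perm := I.perm }
  else I

theorem HookPerm.gT_perm {l : ℕ} (I : HookPerm l) : I.gT.perm = I.perm := by
  unfold HookPerm.gT; split <;> rfl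

theorem HookPerm.gT_hooks {l : ℕ} (I : HookPerm l) (h : I.badSet.Nonempty) :
    I.gT.hooks = Function.update I.hooks (I.badSet.min' h)
      (Hook.tau (I.hooks (I.badSet.min' h))) := by
  unfold HookPerm.gT; rw [dif_pos h]

theorem HookPerm.gT_size {l : ℕ} (I : HookPerm l) (j : Fin l) :
    (I.gT.hooks j).size = (I.hooks j).size := by
  by_cases h : I.badSet.Nonempty
  · rw [HookPerm.gT_hooks I h]
    by_cases hj : j = I.badSet.min' h
    · subst hj; rw [Function.update_self, Hook.tau_size]
    · rw [Function.update_of_ne hj]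
  · unfold HookPerm.gT; rw [dif_neg h]

theorem HookPerm.gT_isInv {l : ℕ} {I : HookPerm l} (hI : I.IsInvolution) :
    I.gT.IsInvolution := by
  by_cases h : I.badSet.Nonempty
  · have hpp : ∀ x, I.perm (I.perm x) = x := fun x => by
      have := congrArg (fun p => p x) hI.1
      simpa using this
    have hfix : I.perm (I.badSet.min' h) = I.badSet.min' h :=
      (HookPerm.mem_badSet (I.badSet.min'_mem h)).1
    constructor
    · rw [HookPerm.gT_perm]; exact hI.1
    · intro j
      rw [HookPerm.gT_perm, HookPerm.gT_hooks I h]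
      by_cases hji : I.perm j = I.badSet.min' h
      · have hj : j = I.badSet.min' h := by
          have := congrArg I.perm hji
          rw [hpp, hfix] at this
          exact this
        rw [hji, hj]
      · have hjne : j ≠ I.badSet.min' h := fun hj => hji (by rw [hj, hfix])
        rw [Function.update_of_ne hji, Function.update_of_ne hjne, hI.2]
  · unfold HookPerm.gT; rw [dif_neg h]; exact hI

theorem HookPerm.badSet_gT {l : ℕ} (I : HookPerm l) (h : I.badSet.Nonempty) :
    I.gT.badSet = I.badSet := by
  have hbad := HookPerm.mem_badSet (I.badSet.min'_mem h)
  ext j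
  rw [HookPerm.mem_badSet_iff, HookPerm.mem_badSet_iff, HookPerm.gT_perm,
    HookPerm.gT_hooks I h]
  by_cases hj : j = I.badSet.min' h
  · subst hj
    rw [Function.update_self]
    constructor
    · rintro ⟨h1, _⟩; exact ⟨h1, hbad.2⟩
    · rintro ⟨h1, h2⟩; exact ⟨h1, Hook.tau_bad _ h2⟩
  · rw [Function.update_of_ne hj]

theorem min'_congr {α : Type*} [LinearOrder α] {s t : Finset α} (h : s = t)
    (hs : s.Nonempty) : s.min' hs = t.min' (h ▸ hs) := by subst h; rfl

theorem HookPerm.gT_gT {l : ℕ} (I : HookPerm l) (h : I.badSet.Nonempty) :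
    I.gT.gT = I := by
  have h2 : I.gT.badSet = I.badSet := I.badSet_gT h
  have h2n : I.gT.badSet.Nonempty := by rw [h2]; exact h
  have hmin : I.gT.badSet.min' h2n = I.badSet.min' h := by
    rw [min'_congr h2 h2n]
  apply HookPerm.ext'
  · rw [HookPerm.gT_hooks _ h2n, hmin, HookPerm.gT_hooks I h, Function.update_self,
      Hook.tau_tau, Function.update_idem, Function.update_eq_self]
  · rw [HookPerm.gT_perm, HookPerm.gT_perm]

theorem HookPerm.gT_ne {l : ℕ} (I : HookPerm l) (h : I.badSet.Nonempty) : I.gT ≠ I := by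
  intro he
  have := congrFun (congrArg HookPerm.hooks he) (I.badSet.min' h)
  rw [HookPerm.gT_hooks I h, Function.update_self] at this
  exact Hook.tau_ne _ (HookPerm.mem_badSet (I.badSet.min'_mem h)).2 this

theorem HookPerm.gT_invSign {l : ℕ} (I : HookPerm l) (h : I.badSet.Nonempty) :
    I.gT.invSign = - I.invSign := by
  classical
  have hbad := HookPerm.mem_badSet (I.badSet.min'_mem h)
  unfold HookPerm.invSign
  simp only [HookPerm.gT_perm]
  have his : I.badSet.min' h ∈ Finset.univ.filter (fun j => I.perm j = j) :=
    Finset.mem_filter.2 ⟨Finset.mem_univ _, hbad.1⟩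
  have hstep : ∀ j ∈ Finset.univ.filter (fun j => I.perm j = j),
      (I.gT.hooks j).sign = Function.update (fun j => (I.hooks j).sign)
        (I.badSet.min' h) (Hook.tau (I.hooks (I.badSet.min' h))).sign j := by
    intro j _
    rw [HookPerm.gT_hooks I h]
    by_cases hj : j = I.badSet.min' h
    · subst hj; rw [Function.update_self, Function.update_self]
    · rw [Function.update_of_ne hj, Function.update_of_ne hj]
  rw [Finset.prod_congr rfl hstep, Finset.prod_update_of_mem his,
    Hook.tau_sign _ hbad.2, ← Finset.mul_prod_erase _ _ his, Finset.erase_eq]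
  ring

/-- For every composition `μ`, the signed sum of hook involutions of content
`μ` equals the number of special hook involutions of content `μ`. -/
theorem stmt1 (l : ℕ) (μ : Fin l → ℕ) (hμ : ∀ i, 0 < μ i) :
    ∑ᶠ I : {I : HookPerm l // I.IsInvolution ∧ ∀ i, (I.hooks i).size = μ i},
        I.1.invSign =
      (Nat.card {I : HookPerm l // I.IsInvolution ∧
        (∀ i, (I.hooks i).size = μ i) ∧ I.IsSpecial} : ℤ) := by
  classical
  haveI hfin : Finite {I : HookPerm l // I.IsInvolution ∧ ∀ i, (I.hooks i).size = μ i} :=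
    Finite.of_injective
      (fun I : {I : HookPerm l // I.IsInvolution ∧ ∀ i, (I.hooks i).size = μ i} =>
        (((fun i => (⟨(I.1.hooks i).height,
          lt_of_lt_of_eq (I.1.hooks i).height_lt (I.2.2 i)⟩ : Fin (μ i)))),
          I.1.perm))
      (by
        intro a b hab
        have hp : a.1.perm = b.1.perm := congrArg Prod.snd hab
        have hh := congrArg Prod.fst hab
        apply Subtype.ext
        apply HookPerm.ext' _ hp
        funext i
        apply Hook.ext'
        · rw [a.2.2 i, b.2.2 i]
        · exact congrArg Fin.val (congrFun hh i))
  haveI := Fintype.ofFinite {I : HookPerm l // I.IsInvolution ∧ ∀ i, (I.hooks i).size = μ i}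
  rw [finsum_eq_sum_of_fintype]
  rw [← Finset.sum_filter_add_sum_filter_not Finset.univ
    (fun I : {I : HookPerm l // I.IsInvolution ∧ ∀ i, (I.hooks i).size = μ i} =>
      I.1.IsSpecial) (fun I => I.1.invSign)]
  have hzero : ∑ I ∈ Finset.univ.filter
      (fun I : {I : HookPerm l // I.IsInvolution ∧ ∀ i, (I.hooks i).size = μ i} =>
        ¬ I.1.IsSpecial), I.1.invSign = 0 := by
    refine Finset.sum_involution
      (fun a _ => ⟨a.1.gT, HookPerm.gT_isInv a.2.1,
        fun i => (HookPerm.gT_size a.1 i).trans (a.2.2 i)⟩)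
      (fun a ha => ?_) (fun a ha _ => ?_) (fun a ha => ?_) (fun a ha => ?_)
    · have hne : a.1.badSet.Nonempty :=
        HookPerm.badSet_nonempty_of ((Finset.mem_filter.1 ha).2)
      show a.1.invSign + a.1.gT.invSign = 0
      rw [HookPerm.gT_invSign a.1 hne]; ring
    · have hne : a.1.badSet.Nonempty :=
        HookPerm.badSet_nonempty_of ((Finset.mem_filter.1 ha).2)
      intro he
      exact HookPerm.gT_ne a.1 hne (congrArg Subtype.val he)
    · have hne : a.1.badSet.Nonempty :=
        HookPerm.badSet_nonempty_of ((Finset.mem_filter.1 ha).2)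
      refine Finset.mem_filter.2 ⟨Finset.mem_univ _, ?_⟩
      show ¬ a.1.gT.IsSpecial
      apply HookPerm.not_special_of_badSet
      rw [HookPerm.badSet_gT a.1 hne]; exact hne
    · have hne : a.1.badSet.Nonempty :=
        HookPerm.badSet_nonempty_of ((Finset.mem_filter.1 ha).2)
      exact Subtype.ext (HookPerm.gT_gT a.1 hne)
  have hone : ∀ I ∈ Finset.univ.filter
      (fun I : {I : HookPerm l // I.IsInvolution ∧ ∀ i, (I.hooks i).size = μ i} =>
        I.1.IsSpecial), I.1.invSign = 1 := by
    intro I hI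
    have hs : I.1.IsSpecial := (Finset.mem_filter.1 hI).2
    unfold HookPerm.invSign
    apply Finset.prod_eq_one
    intro j hj
    have := (hs j (Finset.mem_filter.1 hj).2).2
    simp [Hook.sign, this]
  rw [hzero, add_zero, Finset.sum_congr rfl hone, Finset.sum_const, nsmul_eq_mul, mul_one]
  congr 1
  have e : {I : HookPerm l // I.IsInvolution ∧ (∀ i, (I.hooks i).size = μ i) ∧ I.IsSpecial} ≃
      {x : {I : HookPerm l // I.IsInvolution ∧ ∀ i, (I.hooks i).size = μ i} //
        x.1.IsSpecial} :=
    { toFun := fun x => ⟨⟨x.1, x.2.1, x.2.2.1⟩, x.2.2.2⟩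
      invFun := fun x => ⟨x.1.1, x.1.2.1, x.1.2.2, x.2⟩
      left_inv := fun x => rfl
      right_inv := fun x => rfl }
  rw [Nat.card_congr e, Nat.card_eq_fintype_card, Fintype.card_subtype]
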